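/- For every x ∈ S², every nonzero tangent vector w at x, and all tangent vectors v, v' at x, the parallel transport map satisfies ⟨Π_x^w(v), Π_x^w(v')⟩ = ⟨v, v'⟩ and ⟨Π_x^w(v), Exp_x(w)⟩ = 0. That is, Π_x^w is a linear isometry from the tangent space at x onto the tangent space of S² at the endpoint Exp_x(w) of the geodesic. -/

import Mathlib

open scoped RealInnerProductSpace

noncomputable section
open Classical

/-- The closed-form Riemannian exponential of the unit sphere `S² ⊂ ℝ³`. -/
def sphExp (x w : EuclideanSpace ℝ (Fin 3)) : EuclideanSpace ℝ (Fin 3) :=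
  if w = (0 : EuclideanSpace ℝ (Fin 3)) then x
  else Real.cos ‖w‖ • x + (Real.sin ‖w‖ / ‖w‖) • w

/-- The closed-form Riemannian logarithm of the unit sphere:
`Log_x(y) = arccos(⟨x,y⟩)·(y − ⟨x,y⟩x)/‖y − ⟨x,y⟩x‖`. -/
def sphLog (x y : EuclideanSpace ℝ (Fin 3)) : EuclideanSpace ℝ (Fin 3) :=
  (Real.arccos ⟪x, y⟫ / ‖y - ⟪x, y⟫ • x‖) • (y - ⟪x, y⟫ • x)

/-- Parallel transport of a tangent vector `v` at `x ∈ S²` along the geodesic `t ↦ Exp_x(tw)`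
to time 1: `Π_x^w(v) = ⟨v,ŵ⟩(−sin‖w‖·x + cos‖w‖·ŵ) + (v − ⟨v,ŵ⟩ŵ)` with `ŵ = w/‖w‖`. -/
def sphPar (x w v : EuclideanSpace ℝ (Fin 3)) : EuclideanSpace ℝ (Fin 3) :=
  ⟪v, ‖w‖⁻¹ • w⟫ • ((-Real.sin ‖w‖) • x + Real.cos ‖w‖ • (‖w‖⁻¹ • w))
    + (v - ⟪v, ‖w‖⁻¹ • w⟫ • (‖w‖⁻¹ • w))

/-- Parallel transport on the sphere preserves inner products of tangent vectors and maps
tangent vectors at x to tangent vectors at the endpoint Exp_x(w) of the geodesic. -/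
theorem sphere_parallel_transport_isometry (x w v v' : EuclideanSpace ℝ (Fin 3))
    (hx : ‖x‖ = 1) (hw : ⟪x, w⟫ = 0) (hw0 : w ≠ 0)
    (hv : ⟪x, v⟫ = 0) (hv' : ⟪x, v'⟫ = 0) :
    ⟪sphPar x w v, sphPar x w v'⟫ = ⟪v, v'⟫ ∧
      ⟪sphPar x w v, sphExp x w⟫ = 0 := by
  have hwn : ‖w‖ ≠ 0 := norm_ne_zero_iff.mpr hw0
  set u : EuclideanSpace ℝ (Fin 3) := ‖w‖⁻¹ • w with hu
  have hxx : ⟪x, x⟫ = 1 := by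
    rw [real_inner_self_eq_norm_sq, hx]; norm_num
  have huu : ⟪u, u⟫ = 1 := by
    rw [hu, real_inner_smul_left, real_inner_smul_right, real_inner_self_eq_norm_sq]
    field_simp
  have hxu : ⟪x, u⟫ = 0 := by
    rw [hu, real_inner_smul_right, hw, mul_zero]
  have hux : ⟪u, x⟫ = 0 := by rw [real_inner_comm, hxu]
  have hvx : ⟪v, x⟫ = 0 := by rw [real_inner_comm, hv]
  have hv'x : ⟪v', x⟫ = 0 := by rw [real_inner_comm, hv']
  have huv' : ⟪u, v'⟫ = ⟪v', u⟫ := real_inner_comm v' u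
  have hsc : Real.sin ‖w‖ ^ 2 + Real.cos ‖w‖ ^ 2 = 1 := Real.sin_sq_add_cos_sq ‖w‖
  have hexp : sphExp x w = Real.cos ‖w‖ • x + Real.sin ‖w‖ • u := by
    rw [sphExp, if_neg hw0, hu, smul_smul, div_eq_mul_inv]
  constructor
  · simp only [sphPar, ← hu, inner_add_left, inner_add_right, inner_sub_left,
      inner_sub_right, real_inner_smul_left, real_inner_smul_right,
      hxx, huu, hxu, hux, hvx, hv'x, hv', huv']
    linear_combination ⟪v, u⟫ * ⟪v', u⟫ * hsc
  · rw [hexp]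
    simp only [sphPar, ← hu, inner_add_left, inner_add_right, inner_sub_left,
      real_inner_smul_left, real_inner_smul_right,
      hxx, huu, hxu, hux, hvx]
    ring
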